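/- Let p be an odd prime, q an odd positive integer, and a ∈ (ℤ/pqℤ)* such that the reduction of a modulo p is a generator of the cyclic group (ℤ/pℤ)* and a^{(p−1)/2} ≡ −1 (mod pq). Let H be the subgroup of the additive group ℤ/pqℤ generated by p (so |H| = q). Then every coset of H is a 1-regular coclique of the Cayley graph Γ_{pq}(a): no two elements of a coset are adjacent, and every vertex outside a coset has exactly one neighbour in it. Consequently the cosets of H form a spread of 1-regular cocliques of Γ_{pq}(a). -/

import Mathlib

/-- `S_n(a)`: the set of powers of the unit `a` in `ℤ/nℤ`.  When `a` has even order `2i`,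
this is exactly `{a^j : 0 ≤ j < 2i}`. -/
def powSet (n : ℕ) (a : (ZMod n)ˣ) : Set (ZMod n) :=
  {x : ZMod n | ∃ j : ℕ, x = (a : ZMod n) ^ j}

/-- Let `p` be an odd prime and `q` an odd positive integer, and let `a ∈ (ℤ/pqℤ)*` be
such that `a mod p` generates `(ℤ/pℤ)*` and `a^((p-1)/2) ≡ -1 (mod pq)`.  Let `H` be the
(additive) subgroup of `ℤ/pqℤ` generated by `p`.  Then every coset of `H` is a
`1`-regular coclique of the Cayley graph `Γ_{pq}(a)`: no two of its elements are
adjacent, and every vertex outside it has exactly one neighbour in it.  Consequently the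
cosets of `H` form a spread (a partition of the vertex set) of `1`-regular cocliques. -/
theorem cosets_one_regular_cocliques (p q : ℕ) (hp : p.Prime) (hpodd : Odd p)
    (hqodd : Odd q) (hq : 0 < q) (a : (ZMod (p * q))ˣ)
    (hgen : ∀ x : (ZMod p)ˣ, x ∈ Subgroup.zpowers
      (Units.map (ZMod.castHom (dvd_mul_right p q) (ZMod p)).toMonoidHom a))
    (hneg : (a : ZMod (p * q)) ^ ((p - 1) / 2) = -1)
    (Γ : SimpleGraph (ZMod (p * q)))
    (hΓ : ∀ x y : ZMod (p * q), Γ.Adj x y ↔ x ≠ y ∧ x - y ∈ powSet (p * q) a) :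
    (∀ r : ZMod (p * q),
      (∀ x y : ZMod (p * q),
        x - r ∈ AddSubgroup.zmultiples ((p : ZMod (p * q))) →
        y - r ∈ AddSubgroup.zmultiples ((p : ZMod (p * q))) → ¬ Γ.Adj x y) ∧
      (∀ x : ZMod (p * q), x - r ∉ AddSubgroup.zmultiples ((p : ZMod (p * q))) →
        ∃! y : ZMod (p * q),
          y - r ∈ AddSubgroup.zmultiples ((p : ZMod (p * q))) ∧ Γ.Adj x y)) ∧
    Setoid.IsPartition
      {C : Set (ZMod (p * q)) | ∃ r : ZMod (p * q),
        C = {x : ZMod (p * q) | x - r ∈ AddSubgroup.zmultiples ((p : ZMod (p * q)))}} := by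
  haveI : Fact p.Prime := ⟨hp⟩
  haveI : NeZero (p * q) := ⟨Nat.mul_ne_zero hp.pos.ne' hq.ne'⟩
  set f := ZMod.castHom (dvd_mul_right p q) (ZMod p) with hf
  set b := Units.map f.toMonoidHom a with hb
  have hbv : (b : ZMod p) = f (a : ZMod (p * q)) := rfl
  -- membership in the subgroup H = ⟨p⟩ is detected by reduction mod p
  have hmem : ∀ z : ZMod (p * q),
      z ∈ AddSubgroup.zmultiples ((p : ZMod (p * q))) ↔ f z = 0 := by
    intro z
    constructor
    · rintro ⟨m, rfl⟩
      show f (m • ((p : ℕ) : ZMod (p * q))) = 0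
      rw [zsmul_eq_mul, map_mul, map_natCast, ZMod.natCast_self, mul_zero]
    · intro hz
      have hzv : z = ((z.val : ℕ) : ZMod (p * q)) := by
        rw [ZMod.natCast_val, ZMod.cast_id]
      have h1 : ((z.val : ℕ) : ZMod p) = 0 := by
        have hz' := hz
        rw [hzv] at hz'
        rw [ZMod.natCast_val]; exact hz
      obtain ⟨m, hm⟩ := (ZMod.natCast_eq_zero_iff _ _).mp h1
      refine ⟨(m : ℤ), ?_⟩
      show (m : ℤ) • ((p : ℕ) : ZMod (p * q)) = z
      rw [hzv, hm, zsmul_eq_mul]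
      push_cast
      ring
  -- order computations
  have h2 : 2 ∣ p - 1 := (Nat.Odd.sub_odd hpodd odd_one).two_dvd
  have hbcard : orderOf b = p - 1 := by
    rw [orderOf_eq_card_of_forall_mem_zpowers hgen, Nat.card_eq_fintype_card,
      ZMod.card_units_eq_totient, Nat.totient_prime hp]
  have hapow : (a : ZMod (p * q)) ^ (p - 1) = 1 := by
    have h := congrArg (· ^ 2) hneg
    simp only [← pow_mul, neg_one_sq] at h
    rwa [Nat.div_mul_cancel h2] at h
  have haord : orderOf a ∣ p - 1 := by
    apply orderOf_dvd_of_pow_eq_one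
    ext
    simpa using hapow
  have haeq : orderOf a = p - 1 :=
    Nat.dvd_antisymm haord (hbcard ▸ orderOf_map_dvd (Units.map f.toMonoidHom) a)
  -- injectivity of reduction on powers of a
  have hinj : ∀ j k : ℕ, f ((a : ZMod (p * q)) ^ j) = f ((a : ZMod (p * q)) ^ k) →
      (a : ZMod (p * q)) ^ j = (a : ZMod (p * q)) ^ k := by
    intro j k hjk
    have hb' : b ^ j = b ^ k := by
      ext
      simpa [hbv, map_pow] using hjk
    have hmod0 : j ≡ k [MOD orderOf b] := pow_eq_pow_iff_modEq.mp hb'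
    have hmod : j ≡ k [MOD orderOf a] := by rwa [hbcard, ← haeq] at hmod0
    have hpows := pow_eq_pow_iff_modEq.mpr hmod
    calc (a : ZMod (p * q)) ^ j = ((a ^ j : (ZMod (p * q))ˣ) : ZMod (p * q)) := by simp
      _ = ((a ^ k : (ZMod (p * q))ˣ) : ZMod (p * q)) := by rw [hpows]
      _ = (a : ZMod (p * q)) ^ k := by simp
  -- powers of a reduce to nonzero elements
  have hpow_ne : ∀ j : ℕ, f ((a : ZMod (p * q)) ^ j) ≠ 0 := by
    intro j
    have h : f ((a : ZMod (p * q)) ^ j) = ((b ^ j : (ZMod p)ˣ) : ZMod p) := by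
      simp [hbv, map_pow]
    rw [h]
    exact Units.ne_zero _
  -- key existence/uniqueness lemma
  have key : ∀ c : ZMod (p * q), f c ≠ 0 →
      ∃! s : ZMod (p * q), s ∈ powSet (p * q) a ∧ f (c - s) = 0 := by
    intro c hc
    obtain ⟨u, hu⟩ := (isUnit_iff_ne_zero.mpr hc : IsUnit (f c))
    obtain ⟨m, hm⟩ := mem_powers_iff_mem_zpowers.mpr (hgen u)
    have hm' : b ^ m = u := hm
    have hbm : f ((a : ZMod (p * q)) ^ m) = f c := by
      have h : ((b ^ m : (ZMod p)ˣ) : ZMod p) = f c := by rw [hm', hu]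
      simpa [hbv, map_pow] using h
    refine ⟨(a : ZMod (p * q)) ^ m, ⟨⟨m, rfl⟩, by rw [map_sub, hbm, sub_self]⟩, ?_⟩
    rintro s ⟨⟨j, rfl⟩, hs⟩
    apply hinj
    rw [map_sub, sub_eq_zero] at hs
    rw [hbm, ← hs]
  constructor
  · intro r
    constructor
    · -- coclique
      intro x y hx hy hadj
      obtain ⟨hne, j, hj⟩ := (hΓ x y).mp hadj
      have hxy : x - y ∈ AddSubgroup.zmultiples ((p : ZMod (p * q))) := by
        have h := AddSubgroup.sub_mem _ hx hy
        simpa [sub_sub_sub_cancel_right] using h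
      rw [hmem] at hxy
      exact hpow_ne j (hj ▸ hxy)
    · -- 1-regularity
      intro x hx
      rw [hmem] at hx
      obtain ⟨s, ⟨⟨j, hj⟩, hs⟩, huniq⟩ := key (x - r) hx
      have hsne : s ≠ 0 := by
        intro h
        rw [h, sub_zero] at hs
        exact hx hs
      refine ⟨x - s, ⟨?_, ?_⟩, ?_⟩
      · rw [hmem]
        have h : x - s - r = x - r - s := by ring
        rw [h]
        exact hs
      · rw [hΓ]
        refine ⟨fun h => hsne ?_, ⟨j, by rw [← hj]; ring⟩⟩
        have h' : x - (x - s) = 0 := by rw [← h, sub_self]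
        simpa using h'
      · rintro y ⟨hy, hadj⟩
        obtain ⟨hne, k, hk⟩ := (hΓ x y).mp hadj
        rw [hmem] at hy
        have hxy : f (x - r - (x - y)) = 0 := by
          have h : x - r - (x - y) = y - r := by ring
          rw [h]; exact hy
        have h := huniq (x - y) ⟨⟨k, hk⟩, hxy⟩
        linear_combination -h
  · -- partition
    constructor
    · rintro ⟨r, hr⟩
      have h : r ∈ (∅ : Set (ZMod (p * q))) := hr ▸ by
        simp only [Set.mem_setOf_eq, sub_self]
        exact AddSubgroup.zero_mem _
      exact h
    · intro x
      refine ⟨{z : ZMod (p * q) | z - x ∈ AddSubgroup.zmultiples ((p : ZMod (p * q)))},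
        ⟨⟨x, rfl⟩, by simp only [Set.mem_setOf_eq, sub_self]; exact AddSubgroup.zero_mem _⟩, ?_⟩
      rintro C ⟨⟨r, rfl⟩, hxC⟩
      simp only [Set.mem_setOf_eq] at hxC
      ext z
      simp only [Set.mem_setOf_eq]
      constructor
      · intro hz
        have h := AddSubgroup.sub_mem _ hz hxC
        simpa [sub_sub_sub_cancel_right] using h
      · intro hz
        have h := AddSubgroup.add_mem _ hz hxC
        have h2 : z - x + (x - r) = z - r := by ring
        rwa [h2] at h
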